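/- For n ≥ 2, the maximum weight of a Steinhaus triangle of size n equals ⌈n(n+1)/3⌉. Moreover, it is attained exactly by {z₁, z₂, z₃} if n ≡ 0 or 2 (mod 3), and exactly by {z₁, z₃} if n ≡ 1 (mod 3), where z₁, z₂, z₃ are the first n terms of the periodic sequences 110110…, 011011…, 101101…. -/

import Mathlib

/-- The derivative of a binary sequence: `(∂x)ᵢ = xᵢ + xᵢ₊₁`. -/
def der {n : ℕ} (x : Fin n → ZMod 2) : Fin (n - 1) → ZMod 2 :=
  fun i => x ⟨i.1, by have := i.2; omega⟩ + x ⟨i.1 + 1, by have := i.2; omega⟩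

/-- The iterated derivative `∂ʲx : F₂^{n-j}`. -/
def derIter {n : ℕ} (x : Fin n → ZMod 2) : (j : ℕ) → Fin (n - j) → ZMod 2
  | 0 => x
  | j + 1 => der (derIter x j)

/-- The weight (number of ones) of a binary sequence. -/
def wt {m : ℕ} (y : Fin m → ZMod 2) : ℕ :=
  (Finset.univ.filter fun i => y i = 1).card

/-- The weight of the Steinhaus triangle of `x`: the sum of the weights of all rows. -/
def tw {n : ℕ} (x : Fin n → ZMod 2) : ℕ :=
  ∑ j ∈ Finset.range n, wt (derIter x j)

/-- The standard basis vector `e k` with a single one in position `k`. -/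
def e (n k : ℕ) : Fin n → ZMod 2 := fun i => if i.1 = k then 1 else 0


/-- `z₁` : first n terms of the periodic sequence `110110110…`. -/
def z1 (n : ℕ) : Fin n → ZMod 2 := fun i => if i.1 % 3 = 2 then 0 else 1
/-- `z₂` : first n terms of the periodic sequence `011011011…`. -/
def z2 (n : ℕ) : Fin n → ZMod 2 := fun i => if i.1 % 3 = 0 then 0 else 1
/-- `z₃` : first n terms of the periodic sequence `101101101…`. -/
def z3 (n : ℕ) : Fin n → ZMod 2 := fun i => if i.1 % 3 = 1 then 0 else 1


-- ℕ-indexed infrastructure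
def iota (v : ZMod 2) : ℕ := if v = 1 then 1 else 0
def W (m : ℕ) (y : ℕ → ZMod 2) : ℕ := ∑ i ∈ Finset.range m, iota (y i)
def dd (y : ℕ → ZMod 2) : ℕ → ZMod 2 := fun i => y i + y (i + 1)
def GG (n : ℕ) (y : ℕ → ZMod 2) : ℕ := W n y + W (n - 1) (dd y) + W (n - 2) (dd (dd y))
def twN (n : ℕ) (y : ℕ → ZMod 2) : ℕ := ∑ j ∈ Finset.range n, W (n - j) (dd^[j] y)
def phi (a b : ZMod 2) : ℕ := if a = 0 ∧ b = 0 then 0 else 1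
abbrev tight (a b c : ZMod 2) : Prop :=
  ¬(a = 0 ∧ b = 0 ∧ c = 0) ∧ ¬(a = 0 ∧ b = 1 ∧ c = 0) ∧ ¬(a = 1 ∧ b = 1 ∧ c = 1)
def ok (n : ℕ) (y : ℕ → ZMod 2) : Prop :=
  ¬(y (n - 2) = 0 ∧ y (n - 1) = 0) ∧ ∀ i, i + 3 ≤ n → tight (y i) (y (i + 1)) (y (i + 2))

lemma phi_le (a b : ZMod 2) : phi a b ≤ 1 := by unfold phi; split <;> omega

lemma W_succ (m : ℕ) (y : ℕ → ZMod 2) :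
    W (m + 1) y = W m (fun i => y (i + 1)) + iota (y 0) := by
  simpa [W] using Finset.sum_range_succ' (fun i => iota (y i)) m

lemma key_step : ∀ a b c : ZMod 2,
    iota a + iota (a + b) + iota ((a + b) + (b + c)) + phi b c ≤ 2 + phi a b ∧
    (iota a + iota (a + b) + iota ((a + b) + (b + c)) + phi b c = 2 + phi a b ↔ tight a b c) := by
  decide

lemma key_base : ∀ a b : ZMod 2,
    iota a + iota b + iota (a + b) ≤ 1 + phi a b ∧
    (iota a + iota b + iota (a + b) = 1 + phi a b ↔ ¬(a = 0 ∧ b = 0)) := by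
  decide
lemma GG_decomp (k : ℕ) (y : ℕ → ZMod 2) :
    GG (k + 3) y = (iota (y 0) + iota (dd y 0) + iota (dd (dd y) 0)) + GG (k + 2) (fun i => y (i + 1)) := by
  show W (k + 3) y + W (k + 2) (dd y) + W (k + 1) (dd (dd y)) =
    _ + (W (k + 2) (fun i => y (i + 1)) + W (k + 1) (dd fun i => y (i + 1)) +
      W k (dd (dd fun i => y (i + 1))))
  have h1 : W (k + 3) y = W (k + 2) (fun i => y (i + 1)) + iota (y 0) := W_succ _ _
  have h2 : W (k + 2) (dd y) = W (k + 1) (dd fun i => y (i + 1)) + iota (dd y 0) := by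
    have := W_succ (k + 1) (dd y)
    exact this
  have h3 : W (k + 1) (dd (dd y)) = W k (dd (dd fun i => y (i + 1))) + iota (dd (dd y) 0) := by
    have := W_succ k (dd (dd y))
    exact this
  omega

lemma L1 : ∀ m, ∀ y : ℕ → ZMod 2,
    GG (m + 2) y ≤ 2 * (m + 2) - 3 + phi (y 0) (y 1) ∧
    (GG (m + 2) y = 2 * (m + 2) - 3 + phi (y 0) (y 1) ↔ ok (m + 2) y) := by
  intro m
  induction m with
  | zero =>
    intro y
    simp only [Nat.zero_add]
    have h2 : GG 2 y = iota (y 0) + iota (y 1) + iota (y 0 + y 1) := by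
      simp [GG, W, Finset.sum_range_succ, dd]
    have hok : ok 2 y ↔ ¬(y 0 = 0 ∧ y 1 = 0) := by
      unfold ok
      constructor
      · rintro ⟨h, -⟩; exact h
      · intro h; exact ⟨h, fun i hi => absurd hi (by omega)⟩
    have hb := key_base (y 0) (y 1)
    constructor
    · omega
    · rw [hok, ← hb.2]; omega
  | succ k ih =>
    intro y
    show GG (k + 3) y ≤ 2 * (k + 3) - 3 + phi (y 0) (y 1) ∧
      (GG (k + 3) y = 2 * (k + 3) - 3 + phi (y 0) (y 1) ↔ ok (k + 3) y)
    have hdec := GG_decomp k y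
    have hks := key_step (y 0) (y 1) (y 2)
    have hih := ih (fun i => y (i + 1))
    norm_num at hih
    have hdd0 : dd y 0 = y 0 + y 1 := rfl
    have hdd1 : dd (dd y) 0 = (y 0 + y 1) + (y 1 + y 2) := rfl
    rw [hdd0, hdd1] at hdec
    constructor
    · omega
    · constructor
      · intro h
        have he1 : iota (y 0) + iota (y 0 + y 1) + iota ((y 0 + y 1) + (y 1 + y 2)) + phi (y 1) (y 2)
            = 2 + phi (y 0) (y 1) := by omega
        have he2 : GG (k + 2) (fun i => y (i + 1)) = 2 * (k + 2) - 3 + phi (y 1) (y 2) := by omega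
        have ht : tight (y 0) (y 1) (y 2) := hks.2.mp he1
        have hok' : ok (k + 2) (fun i => y (i + 1)) := hih.2.mp he2
        refine ⟨?_, ?_⟩
        · have := hok'.1
          have e1 : (k + 2 : ℕ) - 2 = k := by omega
          have e2 : (k + 2 : ℕ) - 1 = k + 1 := by omega
          rw [e1, e2] at this
          have e3 : (k + 3 : ℕ) - 2 = k + 1 := by omega
          have e4 : (k + 3 : ℕ) - 1 = k + 2 := by omega
          rw [e3, e4]
          exact this
        · intro i hi
          match i with
          | 0 => exact ht
          | (t + 1) => exact hok'.2 t (by omega)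
      · intro hok
        have ht : tight (y 0) (y 1) (y 2) := hok.2 0 (by omega)
        have hok' : ok (k + 2) (fun i => y (i + 1)) := by
          refine ⟨?_, ?_⟩
          · have := hok.1
            have e3 : (k + 3 : ℕ) - 2 = k + 1 := by omega
            have e4 : (k + 3 : ℕ) - 1 = k + 2 := by omega
            rw [e3, e4] at this
            have e1 : (k + 2 : ℕ) - 2 = k := by omega
            have e2 : (k + 2 : ℕ) - 1 = k + 1 := by omega
            rw [e1, e2]
            exact this
          · intro t hti
            exact hok.2 (t + 1) (by omega)
        have he1 := hks.2.mpr ht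
        have he2 := hih.2.mpr hok'
        omega
lemma twN_dec (m : ℕ) (y : ℕ → ZMod 2) :
    twN (m + 3) y = GG (m + 3) y + twN m (dd^[3] y) := by
  unfold twN
  rw [Finset.sum_range_succ' _ (m + 2), Finset.sum_range_succ' _ (m + 1),
    Finset.sum_range_succ' _ m]
  have hs : ∑ j ∈ Finset.range m, W (m + 3 - (j + 1 + 1 + 1)) (dd^[j + 1 + 1 + 1] y)
      = ∑ j ∈ Finset.range m, W (m - j) (dd^[j] (dd^[3] y)) := by
    refine Finset.sum_congr rfl fun j _ => ?_
    have h1 : m + 3 - (j + 1 + 1 + 1) = m - j := by omega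
    have h2 : dd^[j + 1 + 1 + 1] y = dd^[j] (dd^[3] y) := by
      have : j + 1 + 1 + 1 = j + 3 := by omega
      rw [this, Function.iterate_add_apply]
    rw [h1, h2]
  rw [hs]
  have g0 : W (m + 3 - 0) (dd^[0] y) = W (m + 3) y := by simp
  have g1 : W (m + 3 - (0 + 1)) (dd^[0 + 1] y) = W (m + 2) (dd y) := by
    norm_num
  have g2 : W (m + 3 - (0 + 1 + 1)) (dd^[0 + 1 + 1] y) = W (m + 1) (dd (dd y)) := by
    norm_num
    rfl
  rw [g0, g1, g2]
  show _ = W (m + 3) y + W (m + 2) (dd y) + W (m + 1) (dd (dd y)) + _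
  omega

def liftF {n : ℕ} (x : Fin n → ZMod 2) : ℕ → ZMod 2 :=
  fun i => if h : i < n then x ⟨i, h⟩ else 0

lemma derIter_lift {n : ℕ} (x : Fin n → ZMod 2) :
    ∀ j i (h : i < n - j), derIter x j ⟨i, h⟩ = dd^[j] (liftF x) i := by
  intro j
  induction j with
  | zero =>
    intro i h
    simp [derIter, liftF, Function.iterate_zero]
    intro h'; omega
  | succ j ih =>
    intro i h
    show der (derIter x j) ⟨i, h⟩ = _
    rw [Function.iterate_succ_apply']
    show derIter x j ⟨i, by omega⟩ + derIter x j ⟨i + 1, by omega⟩ = _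
    rw [ih i (by omega), ih (i + 1) (by omega)]
    rfl

lemma wt_eq_W {m : ℕ} (y : Fin m → ZMod 2) (Y : ℕ → ZMod 2)
    (hY : ∀ i (h : i < m), Y i = y ⟨i, h⟩) : wt y = W m Y := by
  unfold wt W
  rw [Finset.card_filter]
  rw [← Fin.sum_univ_eq_sum_range (fun i => iota (Y i)) m]
  refine Finset.sum_congr rfl fun i _ => ?_
  rw [hY i.1 i.2]
  simp only [iota, Fin.eta]

lemma tw_eq_twN {n : ℕ} (x : Fin n → ZMod 2) : tw x = twN n (liftF x) := by
  unfold tw twN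
  refine Finset.sum_congr rfl fun j _ => ?_
  exact wt_eq_W _ _ fun i h => (derIter_lift x j i h).symm

lemma dditer_congr : ∀ (j : ℕ) (Y Y' : ℕ → ZMod 2) (i : ℕ),
    (∀ t, t ≤ j → Y (i + t) = Y' (i + t)) → dd^[j] Y i = dd^[j] Y' i := by
  intro j
  induction j with
  | zero => intro Y Y' i h; simpa using h 0 (le_refl 0)
  | succ j ih =>
    intro Y Y' i h
    rw [Function.iterate_succ_apply, Function.iterate_succ_apply]
    refine ih (dd Y) (dd Y') i fun t ht => ?_
    show Y (i + t) + Y (i + t + 1) = Y' (i + t) + Y' (i + t + 1)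
    have e : i + t + 1 = i + (t + 1) := by omega
    rw [h t (by omega), e, h (t + 1) (by omega)]

lemma twN_congr (n : ℕ) (Y Y' : ℕ → ZMod 2) (h : ∀ i, i < n → Y i = Y' i) :
    twN n Y = twN n Y' := by
  unfold twN
  refine Finset.sum_congr rfl fun j hj => ?_
  unfold W
  refine Finset.sum_congr rfl fun i hi => ?_
  rw [dditer_congr j Y Y' i fun t ht => h (i + t)
    (by simp only [Finset.mem_range] at hj hi; omega)]

lemma dd3_apply (y : ℕ → ZMod 2) (i : ℕ) :
    dd^[3] y i = y i + y (i + 1) + y (i + 2) + y (i + 3) := by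
  show dd (dd (dd y)) i = _
  show ((y i + y (i + 1)) + (y (i + 1) + y (i + 2)))
    + ((y (i + 1) + y (i + 2)) + (y (i + 2) + y (i + 3))) = _
  have h : ∀ a b c d : ZMod 2, ((a + b) + (b + c)) + ((b + c) + (c + d)) = a + b + c + d := by
    decide
  exact h _ _ _ _
def wp1 : ℕ → ZMod 2 := fun i => if i % 3 = 2 then 0 else 1
def wp2 : ℕ → ZMod 2 := fun i => if i % 3 = 0 then 0 else 1
def wp3 : ℕ → ZMod 2 := fun i => if i % 3 = 1 then 0 else 1

lemma wp1_per (k : ℕ) : wp1 (k + 3) = wp1 k := by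
  unfold wp1; have : (k + 3) % 3 = k % 3 := by omega
  rw [this]
lemma wp2_per (k : ℕ) : wp2 (k + 3) = wp2 k := by
  unfold wp2; have : (k + 3) % 3 = k % 3 := by omega
  rw [this]
lemma wp3_per (k : ℕ) : wp3 (k + 3) = wp3 k := by
  unfold wp3; have : (k + 3) % 3 = k % 3 := by omega
  rw [this]

lemma wp1_sum3 (k : ℕ) : wp1 k + wp1 (k + 1) + wp1 (k + 2) = 0 := by
  unfold wp1
  rcases (show k % 3 = 0 ∧ (k+1) % 3 = 1 ∧ (k+2) % 3 = 2 ∨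
      k % 3 = 1 ∧ (k+1) % 3 = 2 ∧ (k+2) % 3 = 0 ∨
      k % 3 = 2 ∧ (k+1) % 3 = 0 ∧ (k+2) % 3 = 1 by omega) with ⟨h0,h1,h2⟩|⟨h0,h1,h2⟩|⟨h0,h1,h2⟩ <;>
    rw [h0, h1, h2] <;> decide
lemma wp2_sum3 (k : ℕ) : wp2 k + wp2 (k + 1) + wp2 (k + 2) = 0 := by
  unfold wp2
  rcases (show k % 3 = 0 ∧ (k+1) % 3 = 1 ∧ (k+2) % 3 = 2 ∨
      k % 3 = 1 ∧ (k+1) % 3 = 2 ∧ (k+2) % 3 = 0 ∨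
      k % 3 = 2 ∧ (k+1) % 3 = 0 ∧ (k+2) % 3 = 1 by omega) with ⟨h0,h1,h2⟩|⟨h0,h1,h2⟩|⟨h0,h1,h2⟩ <;>
    rw [h0, h1, h2] <;> decide
lemma wp3_sum3 (k : ℕ) : wp3 k + wp3 (k + 1) + wp3 (k + 2) = 0 := by
  unfold wp3
  rcases (show k % 3 = 0 ∧ (k+1) % 3 = 1 ∧ (k+2) % 3 = 2 ∨
      k % 3 = 1 ∧ (k+1) % 3 = 2 ∧ (k+2) % 3 = 0 ∨
      k % 3 = 2 ∧ (k+1) % 3 = 0 ∧ (k+2) % 3 = 1 by omega) with ⟨h0,h1,h2⟩|⟨h0,h1,h2⟩|⟨h0,h1,h2⟩ <;>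
    rw [h0, h1, h2] <;> decide

lemma wp1_tight (k : ℕ) : tight (wp1 k) (wp1 (k + 1)) (wp1 (k + 2)) := by
  unfold wp1
  rcases (show k % 3 = 0 ∧ (k+1) % 3 = 1 ∧ (k+2) % 3 = 2 ∨
      k % 3 = 1 ∧ (k+1) % 3 = 2 ∧ (k+2) % 3 = 0 ∨
      k % 3 = 2 ∧ (k+1) % 3 = 0 ∧ (k+2) % 3 = 1 by omega) with ⟨h0,h1,h2⟩|⟨h0,h1,h2⟩|⟨h0,h1,h2⟩ <;>
    rw [h0, h1, h2] <;> decide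
lemma wp2_tight (k : ℕ) : tight (wp2 k) (wp2 (k + 1)) (wp2 (k + 2)) := by
  unfold wp2
  rcases (show k % 3 = 0 ∧ (k+1) % 3 = 1 ∧ (k+2) % 3 = 2 ∨
      k % 3 = 1 ∧ (k+1) % 3 = 2 ∧ (k+2) % 3 = 0 ∨
      k % 3 = 2 ∧ (k+1) % 3 = 0 ∧ (k+2) % 3 = 1 by omega) with ⟨h0,h1,h2⟩|⟨h0,h1,h2⟩|⟨h0,h1,h2⟩ <;>
    rw [h0, h1, h2] <;> decide
lemma wp3_tight (k : ℕ) : tight (wp3 k) (wp3 (k + 1)) (wp3 (k + 2)) := by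
  unfold wp3
  rcases (show k % 3 = 0 ∧ (k+1) % 3 = 1 ∧ (k+2) % 3 = 2 ∨
      k % 3 = 1 ∧ (k+1) % 3 = 2 ∧ (k+2) % 3 = 0 ∨
      k % 3 = 2 ∧ (k+1) % 3 = 0 ∧ (k+2) % 3 = 1 by omega) with ⟨h0,h1,h2⟩|⟨h0,h1,h2⟩|⟨h0,h1,h2⟩ <;>
    rw [h0, h1, h2] <;> decide

lemma wp1_pair (k : ℕ) : ¬(wp1 k = 0 ∧ wp1 (k + 1) = 0) := by
  unfold wp1
  rcases (show k % 3 = 0 ∧ (k+1) % 3 = 1 ∨ k % 3 = 1 ∧ (k+1) % 3 = 2 ∨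
      k % 3 = 2 ∧ (k+1) % 3 = 0 by omega) with ⟨h0,h1⟩|⟨h0,h1⟩|⟨h0,h1⟩ <;>
    rw [h0, h1] <;> decide
lemma wp2_pair (k : ℕ) : ¬(wp2 k = 0 ∧ wp2 (k + 1) = 0) := by
  unfold wp2
  rcases (show k % 3 = 0 ∧ (k+1) % 3 = 1 ∨ k % 3 = 1 ∧ (k+1) % 3 = 2 ∨
      k % 3 = 2 ∧ (k+1) % 3 = 0 by omega) with ⟨h0,h1⟩|⟨h0,h1⟩|⟨h0,h1⟩ <;>
    rw [h0, h1] <;> decide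
lemma wp3_pair (k : ℕ) : ¬(wp3 k = 0 ∧ wp3 (k + 1) = 0) := by
  unfold wp3
  rcases (show k % 3 = 0 ∧ (k+1) % 3 = 1 ∨ k % 3 = 1 ∧ (k+1) % 3 = 2 ∨
      k % 3 = 2 ∧ (k+1) % 3 = 0 by omega) with ⟨h0,h1⟩|⟨h0,h1⟩|⟨h0,h1⟩ <;>
    rw [h0, h1] <;> decide

set_option synthInstance.maxSize 2000 in
set_option maxHeartbeats 1000000 in
lemma firstfive : ∀ w0 w1 w2 a b c d e : ZMod 2, w0 + w1 + w2 = 0 →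
    ¬(w0 = 0 ∧ w1 = 0 ∧ w2 = 0) →
    tight a b c → tight b c d → tight c d e →
    a + b + c + d = w0 → b + c + d + e = w1 →
    a = w0 ∧ b = w1 ∧ c = w2 := by decide

lemma LemU (w : ℕ → ZMod 2) (hper : ∀ k, w (k + 3) = w k)
    (hsum3 : ∀ k, w k + w (k + 1) + w (k + 2) = 0)
    (hnz : ¬(w 0 = 0 ∧ w 1 = 0 ∧ w 2 = 0))
    (n : ℕ) (hn : 5 ≤ n) (Y : ℕ → ZMod 2)
    (hwin : ∀ i, i + 3 ≤ n → tight (Y i) (Y (i + 1)) (Y (i + 2)))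
    (hs : ∀ i, i + 3 < n → Y i + Y (i + 1) + Y (i + 2) + Y (i + 3) = w i) :
    ∀ i, i < n → Y i = w i := by
  have hff := firstfive (w 0) (w 1) (w 2) (Y 0) (Y 1) (Y 2) (Y 3) (Y 4)
    (hsum3 0) hnz (hwin 0 (by omega)) (hwin 1 (by omega)) (hwin 2 (by omega))
    (hs 0 (by omega)) (hs 1 (by omega))
  intro i
  induction i using Nat.strong_induction_on with
  | _ i IH =>
    intro hi
    rcases Nat.lt_or_ge i 3 with h3 | h3
    · interval_cases i
      · exact hff.1
      · exact hff.2.1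
      · exact hff.2.2
    · obtain ⟨k, rfl⟩ : ∃ k, i = k + 3 := ⟨i - 3, by omega⟩
      have h4 := hs k (by omega)
      have e0 := IH k (by omega) (by omega)
      have e1 := IH (k + 1) (by omega) (by omega)
      have e2 := IH (k + 2) (by omega) (by omega)
      rw [e0, e1, e2] at h4
      have solve : ∀ a b c d s : ZMod 2, a + b + c + d = s → a + b + c = 0 → d = s := by decide
      rw [hper]
      exact solve _ _ _ _ _ h4 (hsum3 k)
def MAXW (n : ℕ) : ℕ := (n * (n + 1) + 2) / 3

lemma maxRec3 (m : ℕ) : MAXW (m + 5) = (2 * (m + 5) - 2) + MAXW (m + 2) := by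
  unfold MAXW
  have h : (m + 5) * (m + 5 + 1) + 2 = ((m + 2) * (m + 2 + 1) + 2) + (2 * m + 8) * 3 := by ring
  rw [h, Nat.add_mul_div_right _ _ (by norm_num : (0:ℕ) < 3)]
  omega

lemma base2 : (∀ x : Fin 2 → ZMod 2, tw x ≤ MAXW 2) ∧
    (∀ x : Fin 2 → ZMod 2, tw x = MAXW 2 ↔ (x = z1 2 ∨ x = z3 2 ∨ (2 % 3 ≠ 1 ∧ x = z2 2))) := by
  decide

lemma base3 : (∀ x : Fin 3 → ZMod 2, tw x ≤ MAXW 3) ∧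
    (∀ x : Fin 3 → ZMod 2, tw x = MAXW 3 ↔ (x = z1 3 ∨ x = z3 3 ∨ (3 % 3 ≠ 1 ∧ x = z2 3))) := by
  decide

lemma base4 : (∀ x : Fin 4 → ZMod 2, tw x ≤ MAXW 4) ∧
    (∀ x : Fin 4 → ZMod 2, tw x = MAXW 4 ↔ (x = z1 4 ∨ x = z3 4 ∨ (4 % 3 ≠ 1 ∧ x = z2 4))) := by
  decide

lemma lift_z1 (n i : ℕ) (h : i < n) : liftF (z1 n) i = wp1 i := by
  unfold liftF z1 wp1; rw [dif_pos h]
lemma lift_z2 (n i : ℕ) (h : i < n) : liftF (z2 n) i = wp2 i := by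
  unfold liftF z2 wp2; rw [dif_pos h]
lemma lift_z3 (n i : ℕ) (h : i < n) : liftF (z3 n) i = wp3 i := by
  unfold liftF z3 wp3; rw [dif_pos h]

lemma ok_z1 (n : ℕ) (hn : 2 ≤ n) : ok n (liftF (z1 n)) := by
  constructor
  · have e : n - 1 = (n - 2) + 1 := by omega
    rw [e, lift_z1 n (n - 2) (by omega), lift_z1 n ((n - 2) + 1) (by omega)]
    exact wp1_pair (n - 2)
  · intro i hi
    rw [lift_z1 n i (by omega), lift_z1 n (i + 1) (by omega), lift_z1 n (i + 2) (by omega)]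
    exact wp1_tight i

lemma ok_z2 (n : ℕ) (hn : 2 ≤ n) : ok n (liftF (z2 n)) := by
  constructor
  · have e : n - 1 = (n - 2) + 1 := by omega
    rw [e, lift_z2 n (n - 2) (by omega), lift_z2 n ((n - 2) + 1) (by omega)]
    exact wp2_pair (n - 2)
  · intro i hi
    rw [lift_z2 n i (by omega), lift_z2 n (i + 1) (by omega), lift_z2 n (i + 2) (by omega)]
    exact wp2_tight i

lemma ok_z3 (n : ℕ) (hn : 2 ≤ n) : ok n (liftF (z3 n)) := by
  constructor
  · have e : n - 1 = (n - 2) + 1 := by omega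
    rw [e, lift_z3 n (n - 2) (by omega), lift_z3 n ((n - 2) + 1) (by omega)]
    exact wp3_pair (n - 2)
  · intro i hi
    rw [lift_z3 n i (by omega), lift_z3 n (i + 1) (by omega), lift_z3 n (i + 2) (by omega)]
    exact wp3_tight i

lemma phi_z1 (n : ℕ) (hn : 2 ≤ n) : phi (liftF (z1 n) 0) (liftF (z1 n) 1) = 1 := by
  rw [lift_z1 n 0 (by omega), lift_z1 n 1 (by omega)]
  exact if_neg (wp1_pair 0)
lemma phi_z2 (n : ℕ) (hn : 2 ≤ n) : phi (liftF (z2 n) 0) (liftF (z2 n) 1) = 1 := by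
  rw [lift_z2 n 0 (by omega), lift_z2 n 1 (by omega)]
  exact if_neg (wp2_pair 0)
lemma phi_z3 (n : ℕ) (hn : 2 ≤ n) : phi (liftF (z3 n) 0) (liftF (z3 n) 1) = 1 := by
  rw [lift_z3 n 0 (by omega), lift_z3 n 1 (by omega)]
  exact if_neg (wp3_pair 0)

lemma hstep (m : ℕ) (x : Fin (m + 5) → ZMod 2) :
    tw x = GG (m + 5) (liftF x) + tw (fun i : Fin (m + 2) => dd^[3] (liftF x) i.1) := by
  rw [tw_eq_twN x]
  have h1 : twN (m + 5) (liftF x) = GG (m + 5) (liftF x) + twN (m + 2) (dd^[3] (liftF x)) :=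
    twN_dec (m + 2) (liftF x)
  rw [h1]
  congr 1
  rw [tw_eq_twN]
  refine twN_congr _ _ _ fun i hi => ?_
  simp [liftF, hi]
lemma pin (w : ℕ → ZMod 2) (hper : ∀ k, w (k + 3) = w k)
    (hsum3 : ∀ k, w k + w (k + 1) + w (k + 2) = 0)
    (hnz : ¬(w 0 = 0 ∧ w 1 = 0 ∧ w 2 = 0))
    (m : ℕ) (x : Fin (m + 5) → ZMod 2)
    (hwin : ∀ i, i + 3 ≤ m + 5 → tight (liftF x i) (liftF x (i + 1)) (liftF x (i + 2)))
    (hz : ∀ i : ℕ, i < m + 2 → dd^[3] (liftF x) i = w i) :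
    ∀ i : Fin (m + 5), x i = w i.1 := by
  have hsY : ∀ i, i + 3 < m + 5 →
      liftF x i + liftF x (i + 1) + liftF x (i + 2) + liftF x (i + 3) = w i := by
    intro i hi
    rw [← dd3_apply]
    exact hz i (by omega)
  have hall := LemU w hper hsum3 hnz (m + 5) (by omega) (liftF x) hwin hsY
  intro i
  have h := hall i.1 i.2
  rwa [show liftF x i.1 = x i from by simp [liftF, i.isLt]] at h

lemma master : ∀ n, 2 ≤ n →
    (∀ x : Fin n → ZMod 2, tw x ≤ MAXW n) ∧
    (∀ x : Fin n → ZMod 2, tw x = MAXW n ↔ (x = z1 n ∨ x = z3 n ∨ (n % 3 ≠ 1 ∧ x = z2 n))) := by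
  intro n
  induction n using Nat.strong_induction_on with
  | _ n IH =>
    intro hn
    rcases (show n = 2 ∨ n = 3 ∨ n = 4 ∨ ∃ m, n = m + 5 from by
      rcases Nat.lt_or_ge n 5 with h | h
      · interval_cases n
        · exact Or.inl rfl
        · exact Or.inr (Or.inl rfl)
        · exact Or.inr (Or.inr (Or.inl rfl))
      · exact Or.inr (Or.inr (Or.inr ⟨n - 5, by omega⟩))) with rfl | rfl | rfl | ⟨m, rfl⟩
    · exact base2
    · exact base3
    · exact base4
    · have hIH := IH (m + 2) (by omega) (by omega)
      have hmr := maxRec3 m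
      have hub : ∀ x : Fin (m + 5) → ZMod 2, tw x ≤ MAXW (m + 5) := by
        intro x
        have hs := hstep m x
        have hL1 : GG (m + 5) (liftF x) ≤ 2 * (m + 5) - 3 + phi (liftF x 0) (liftF x 1) ∧
            (GG (m + 5) (liftF x) = 2 * (m + 5) - 3 + phi (liftF x 0) (liftF x 1) ↔
              ok (m + 5) (liftF x)) := L1 (m + 3) (liftF x)
        have hphi := phi_le (liftF x 0) (liftF x 1)
        have hxx := hIH.1 (fun i : Fin (m + 2) => dd^[3] (liftF x) i.1)
        omega
      refine ⟨hub, fun x => ⟨?_, ?_⟩⟩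
      · intro h
        have hs := hstep m x
        have hL1 : GG (m + 5) (liftF x) ≤ 2 * (m + 5) - 3 + phi (liftF x 0) (liftF x 1) ∧
            (GG (m + 5) (liftF x) = 2 * (m + 5) - 3 + phi (liftF x 0) (liftF x 1) ↔
              ok (m + 5) (liftF x)) := L1 (m + 3) (liftF x)
        have hphi := phi_le (liftF x 0) (liftF x 1)
        have hxx := hIH.1 (fun i : Fin (m + 2) => dd^[3] (liftF x) i.1)
        have hGGeq : GG (m + 5) (liftF x) = 2 * (m + 5) - 3 + phi (liftF x 0) (liftF x 1) ∧
            tw (fun i : Fin (m + 2) => dd^[3] (liftF x) i.1) = MAXW (m + 2) := by omega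
        have hok := hL1.2.mp hGGeq.1
        have hzz := (hIH.2 (fun i : Fin (m + 2) => dd^[3] (liftF x) i.1)).mp hGGeq.2
        rcases hzz with hz | hz | ⟨hmod, hz⟩
        · left; funext i
          exact pin wp1 wp1_per wp1_sum3 (by decide) m x hok.2
            (fun i hi => congrFun hz ⟨i, hi⟩) i
        · right; left; funext i
          exact pin wp3 wp3_per wp3_sum3 (by decide) m x hok.2
            (fun i hi => congrFun hz ⟨i, hi⟩) i
        · right; right
          refine ⟨by omega, ?_⟩
          funext i
          exact pin wp2 wp2_per wp2_sum3 (by decide) m x hok.2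
            (fun i hi => congrFun hz ⟨i, hi⟩) i
      · intro h
        rcases h with rfl | rfl | ⟨hmod, rfl⟩
        · rw [hstep m (z1 (m + 5))]
          have hGG : GG (m + 5) (liftF (z1 (m + 5))) = 2 * (m + 5) - 2 := by
            have hL1 : GG (m + 5) (liftF (z1 (m + 5))) ≤ 2 * (m + 5) - 3 +
                phi (liftF (z1 (m + 5)) 0) (liftF (z1 (m + 5)) 1) ∧
                (GG (m + 5) (liftF (z1 (m + 5))) = 2 * (m + 5) - 3 +
                  phi (liftF (z1 (m + 5)) 0) (liftF (z1 (m + 5)) 1) ↔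
                  ok (m + 5) (liftF (z1 (m + 5)))) := L1 (m + 3) (liftF (z1 (m + 5)))
            have heq := hL1.2.mpr (ok_z1 (m + 5) (by omega))
            have hp := phi_z1 (m + 5) (by omega)
            omega
          have hxx : (fun i : Fin (m + 2) => dd^[3] (liftF (z1 (m + 5))) i.1) = z1 (m + 2) := by
            funext i
            show dd^[3] (liftF (z1 (m + 5))) i.1 = _
            rw [dd3_apply, lift_z1 (m + 5) i.1 (by omega), lift_z1 (m + 5) (i.1 + 1) (by omega),
              lift_z1 (m + 5) (i.1 + 2) (by omega), lift_z1 (m + 5) (i.1 + 3) (by omega),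
              wp1_per i.1]
            have hred : ∀ a b c : ZMod 2, a + b + c = 0 → a + b + c + a = a := by decide
            exact hred _ _ _ (wp1_sum3 i.1)
          rw [hxx, hGG, (hIH.2 (z1 (m + 2))).mpr (Or.inl rfl)]
          omega
        · rw [hstep m (z3 (m + 5))]
          have hGG : GG (m + 5) (liftF (z3 (m + 5))) = 2 * (m + 5) - 2 := by
            have hL1 : GG (m + 5) (liftF (z3 (m + 5))) ≤ 2 * (m + 5) - 3 +
                phi (liftF (z3 (m + 5)) 0) (liftF (z3 (m + 5)) 1) ∧
                (GG (m + 5) (liftF (z3 (m + 5))) = 2 * (m + 5) - 3 +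
                  phi (liftF (z3 (m + 5)) 0) (liftF (z3 (m + 5)) 1) ↔
                  ok (m + 5) (liftF (z3 (m + 5)))) := L1 (m + 3) (liftF (z3 (m + 5)))
            have heq := hL1.2.mpr (ok_z3 (m + 5) (by omega))
            have hp := phi_z3 (m + 5) (by omega)
            omega
          have hxx : (fun i : Fin (m + 2) => dd^[3] (liftF (z3 (m + 5))) i.1) = z3 (m + 2) := by
            funext i
            show dd^[3] (liftF (z3 (m + 5))) i.1 = _
            rw [dd3_apply, lift_z3 (m + 5) i.1 (by omega), lift_z3 (m + 5) (i.1 + 1) (by omega),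
              lift_z3 (m + 5) (i.1 + 2) (by omega), lift_z3 (m + 5) (i.1 + 3) (by omega),
              wp3_per i.1]
            have hred : ∀ a b c : ZMod 2, a + b + c = 0 → a + b + c + a = a := by decide
            exact hred _ _ _ (wp3_sum3 i.1)
          rw [hxx, hGG, (hIH.2 (z3 (m + 2))).mpr (Or.inr (Or.inl rfl))]
          omega
        · rw [hstep m (z2 (m + 5))]
          have hGG : GG (m + 5) (liftF (z2 (m + 5))) = 2 * (m + 5) - 2 := by
            have hL1 : GG (m + 5) (liftF (z2 (m + 5))) ≤ 2 * (m + 5) - 3 +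
                phi (liftF (z2 (m + 5)) 0) (liftF (z2 (m + 5)) 1) ∧
                (GG (m + 5) (liftF (z2 (m + 5))) = 2 * (m + 5) - 3 +
                  phi (liftF (z2 (m + 5)) 0) (liftF (z2 (m + 5)) 1) ↔
                  ok (m + 5) (liftF (z2 (m + 5)))) := L1 (m + 3) (liftF (z2 (m + 5)))
            have heq := hL1.2.mpr (ok_z2 (m + 5) (by omega))
            have hp := phi_z2 (m + 5) (by omega)
            omega
          have hxx : (fun i : Fin (m + 2) => dd^[3] (liftF (z2 (m + 5))) i.1) = z2 (m + 2) := by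
            funext i
            show dd^[3] (liftF (z2 (m + 5))) i.1 = _
            rw [dd3_apply, lift_z2 (m + 5) i.1 (by omega), lift_z2 (m + 5) (i.1 + 1) (by omega),
              lift_z2 (m + 5) (i.1 + 2) (by omega), lift_z2 (m + 5) (i.1 + 3) (by omega),
              wp2_per i.1]
            have hred : ∀ a b c : ZMod 2, a + b + c = 0 → a + b + c + a = a := by decide
            exact hred _ _ _ (wp2_sum3 i.1)
          rw [hxx, hGG, (hIH.2 (z2 (m + 2))).mpr (Or.inr (Or.inr ⟨by omega, rfl⟩))]
          omega

theorem stmt18 (n : ℕ) (hn : 2 ≤ n) :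
    IsGreatest {w : ℕ | ∃ x : Fin n → ZMod 2, tw x = w}
      ((n * (n + 1) + 2) / 3) ∧
    (n % 3 = 0 ∨ n % 3 = 2 →
      ∀ x : Fin n → ZMod 2, tw x = (n * (n + 1) + 2) / 3 ↔
        x = z1 n ∨ x = z2 n ∨ x = z3 n) ∧
    (n % 3 = 1 →
      ∀ x : Fin n → ZMod 2, tw x = (n * (n + 1) + 2) / 3 ↔
        x = z1 n ∨ x = z3 n) := by
  have hm := master n hn
  refine ⟨⟨⟨z1 n, (hm.2 (z1 n)).mpr (Or.inl rfl)⟩, ?_⟩, ?_, ?_⟩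
  · rintro w ⟨x, rfl⟩
    exact hm.1 x
  · intro hmod x
    have h := hm.2 x
    rw [show ((n * (n + 1) + 2) / 3 : ℕ) = MAXW n from rfl, h]
    constructor
    · rintro (h1 | h1 | ⟨-, h1⟩) <;> tauto
    · rintro (h1 | h1 | h1)
      · tauto
      · exact Or.inr (Or.inr ⟨by omega, h1⟩)
      · tauto
  · intro hmod x
    have h := hm.2 x
    rw [show ((n * (n + 1) + 2) / 3 : ℕ) = MAXW n from rfl, h]
    constructor
    · rintro (h1 | h1 | ⟨h1, -⟩) <;> tauto
    · rintro (h1 | h1) <;> tauto
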